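/- Let x_0, …, x_d ∈ ℝ^d and a_0,…,a_d > 0 with Σ_{i=0}^{d} a_i x_i = 0, and suppose for each i the family {x_j : j ≠ i} is a basis of ℝ^d. Let g_0,…,g_d ∈ ℝ^d be arbitrary vectors and for each i let v_i ∈ ℝ^d be the unique point satisfying v_i · x_j = g_j · x_j for all j ≠ i. Then for all i ≠ j the identity (v_j − v_i) · x_i = (a_j / a_i) · ((v_i − v_j) · x_j) holds. -/

import Mathlib

/-- Given points `x 0, …, x d` in `ℝ^d`, positive coefficients `a i`
with `∑ i, a i • x i = 0` such that each subfamily `{x j : j ≠ i}` is a basis of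
`ℝ^d`, arbitrary vectors `g i`, and vertices `v i` solving `v i · x j = g j · x j`
for all `j ≠ i`, one has `(v j - v i) · x i = (a j / a i) * ((v i - v j) · x j)`
for all `i ≠ j`. -/
theorem statement1 (d : ℕ)
    (x : Fin (d + 1) → EuclideanSpace ℝ (Fin d))
    (a : Fin (d + 1) → ℝ) (ha : ∀ i, 0 < a i)
    (hsum : ∑ i, a i • x i = 0)
    (hbasis : ∀ i : Fin (d + 1),
      LinearIndependent ℝ (fun j : {j : Fin (d + 1) // j ≠ i} => x (j : Fin (d + 1))) ∧
      Submodule.span ℝ (x '' {j | j ≠ i}) = ⊤)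
    (g : Fin (d + 1) → EuclideanSpace ℝ (Fin d))
    (v : Fin (d + 1) → EuclideanSpace ℝ (Fin d))
    (hv : ∀ i j, j ≠ i → (inner ℝ (v i) (x j) : ℝ) = inner ℝ (g j) (x j)) :
    ∀ i j, i ≠ j →
      (inner ℝ (v j - v i) (x i) : ℝ) = (a j / a i) * (inner ℝ (v i - v j) (x j) : ℝ) := by
  intro i j hij
  have hzero : ∀ k, k ≠ i → k ≠ j → (inner ℝ (v j - v i) (x k) : ℝ) = 0 := by
    intro k hki hkj
    rw [inner_sub_left, hv j k hkj, hv i k hki, sub_self]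
  have key : (∑ k, a k * (inner ℝ (v j - v i) (x k) : ℝ)) = 0 := by
    have : (inner ℝ (v j - v i) (∑ k, a k • x k) : ℝ) = 0 := by
      rw [hsum, inner_zero_right]
    rw [inner_sum] at this
    rw [← this]
    exact Finset.sum_congr rfl fun k _ => (real_inner_smul_right _ _ _).symm
  have key2 : (∑ k, a k * (inner ℝ (v j - v i) (x k) : ℝ)) =
      a i * (inner ℝ (v j - v i) (x i) : ℝ) + a j * (inner ℝ (v j - v i) (x j) : ℝ) := by
    rw [← Finset.sum_subset (Finset.subset_univ ({i, j} : Finset (Fin (d + 1))))]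
    · rw [Finset.sum_pair hij]
    · intro k _ hk
      simp only [Finset.mem_insert, Finset.mem_singleton, not_or] at hk
      rw [hzero k hk.1 hk.2, mul_zero]
  have h3 : a i * (inner ℝ (v j - v i) (x i) : ℝ) = a j * (inner ℝ (v i - v j) (x j) : ℝ) := by
    have := key2 ▸ key
    have h4 : (inner ℝ (v i - v j) (x j) : ℝ) = -(inner ℝ (v j - v i) (x j) : ℝ) := by
      rw [← inner_neg_left]; congr 1; abel
    rw [h4]; linarith
  rw [div_mul_eq_mul_div, eq_div_iff (ha i).ne']
  linarith [h3]
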